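/- Let P be an r-differential poset and let τ_n denote the number of thread elements of rank n. Then τ is nondecreasing: τ_n ≤ τ_{n+1} for all n ≥ 0. -/

import Mathlib

open Classical in
/-- The up operator `U_n : ℚP_n → ℚP_{n+1}` of a graded poset with rank function `rank`,
sending each basis element `x ∈ P_n` to the sum of the elements covering it. -/
noncomputable def upMap {P : Type*} [PartialOrder P] (rank : P → ℕ)
    [∀ m : ℕ, Fintype {x : P // rank x = m}] (n : ℕ) :
    ({x : P // rank x = n} → ℚ) →ₗ[ℚ] ({x : P // rank x = n + 1} → ℚ) :=
  Matrix.mulVecLin (fun (y : {x : P // rank x = n + 1}) (x : {x : P // rank x = n}) =>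
    if (x : P) ⋖ (y : P) then 1 else 0)

open Classical in
/-- The down operator `D_n : ℚP_n → ℚP_{n-1}` of a graded poset with rank function `rank`,
sending each basis element `x ∈ P_n` to the sum of the elements it covers.
(For `n = 0` this is the zero map on `ℚP_0` in a graded poset, matching `D_0 = 0`.) -/
noncomputable def downMap {P : Type*} [PartialOrder P] (rank : P → ℕ)
    [∀ m : ℕ, Fintype {x : P // rank x = m}] (n : ℕ) :
    ({x : P // rank x = n} → ℚ) →ₗ[ℚ] ({x : P // rank x = n - 1} → ℚ) :=
  Matrix.mulVecLin (fun (z : {x : P // rank x = n - 1}) (x : {x : P // rank x = n}) =>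
    if (z : P) ⋖ (x : P) then 1 else 0)

/-- `P` (a partial order with rank function `rank`, all rank sets finite) is an
`r`-differential poset: `r > 0`, there is a least element `0̂` of rank `0`, the poset is
graded (covers raise rank by exactly one, the rank function is strictly monotone, and every
element of nonzero rank covers something), and `D_{n+1} U_n - U_{n-1} D_n = r·I` on `ℚP_n`
for all `n ≥ 0` (for `n = 0` the relation reads `D_1 U_0 = r·I`, since `D_0 = 0`). -/
structure IsDifferentialPoset {P : Type*} [PartialOrder P] (rank : P → ℕ)
    [∀ m : ℕ, Fintype {x : P // rank x = m}] (r : ℕ) : Prop where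
  r_pos : 0 < r
  exists_bot : ∃ b : P, rank b = 0 ∧ ∀ x : P, b ≤ x
  rank_covBy : ∀ x y : P, x ⋖ y → rank y = rank x + 1
  rank_strictMono : ∀ x y : P, x < y → rank x < rank y
  exists_covBy_of_rank_ne_zero : ∀ x : P, rank x ≠ 0 → ∃ y : P, y ⋖ x
  diff_zero : downMap rank 1 ∘ₗ upMap rank 0 = (r : ℚ) • LinearMap.id
  diff : ∀ n : ℕ,
    LinearMap.comp (M₃ := {x : P // rank x = n + 1} → ℚ)
        (downMap rank (n + 2)) (upMap rank (n + 1))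
      - upMap rank n ∘ₗ downMap rank (n + 1) = (r : ℚ) • LinearMap.id

/-- An element of a graded poset is a *singleton* if it has rank `0` (i.e. it is `0̂`)
or it covers exactly one element. -/
def IsSingletonElem {P : Type*} [PartialOrder P] (rank : P → ℕ) (x : P) : Prop :=
  rank x = 0 ∨ ∃! z : P, z ⋖ x

/-- A *thread element* is a singleton which covers another singleton. -/
def IsThreadElem {P : Type*} [PartialOrder P] (rank : P → ℕ) (x : P) : Prop :=
  IsSingletonElem rank x ∧ ∃ z : P, z ⋖ x ∧ IsSingletonElem rank z

section Aux
open Classical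
variable {P : Type*} [PartialOrder P] (rank : P → ℕ)
variable [∀ m : ℕ, Fintype {x : P // rank x = m}] {r : ℕ}

private lemma sum_ite_mul_ite {α : Type*} [Fintype α] (p q : α → Prop) :
    (∑ y : α, (if p y then (1:ℚ) else 0) * (if q y then 1 else 0))
      = Fintype.card {y : α // p y ∧ q y} := by
  classical
  have h : ∀ y, (if p y then (1:ℚ) else 0) * (if q y then 1 else 0)
      = if p y ∧ q y then 1 else 0 := fun y => by
    by_cases h1 : p y <;> by_cases h2 : q y <;> simp [h1, h2]
  simp only [h, Finset.sum_boole, Fintype.card_subtype]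


private lemma sum_nested {α : Type*} [Fintype α] (p q : α → Prop) :
    (∑ y : α, if p y then (if q y then (1:ℚ) else 0) else 0)
      = Fintype.card {y : α // p y ∧ q y} := by
  classical
  rw [Fintype.card_subtype, ← Finset.sum_boole]
  apply Finset.sum_congr rfl
  intro y _
  by_cases h1 : p y <;> by_cases h2 : q y <;> simp [h1, h2]

private lemma downMap_apply' (n : ℕ) (v : {w : P // rank w = n + 1} → ℚ)
    (z : {w : P // rank w = n}) :
    (downMap rank (n + 1) : ({w : P // rank w = n + 1} → ℚ) →ₗ[ℚ] ({w : P // rank w = n} → ℚ)) v z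
      = ∑ u : {w : P // rank w = n + 1}, (if (z : P) ⋖ (u : P) then 1 else 0) * v u := rfl

/-- key matrix-entry identity -/
lemma card_entry (hP : IsDifferentialPoset rank r) (n : ℕ)
    (x x' : {w : P // rank w = n}) :
    Fintype.card {y : {w : P // rank w = n + 1} // (x : P) ⋖ (y : P) ∧ (x' : P) ⋖ (y : P)}
      = Fintype.card {z : {w : P // rank w = n - 1} // (z : P) ⋖ (x : P) ∧ (z : P) ⋖ (x' : P)}
        + (if x' = x then r else 0) := by
  classical
  -- lower set is empty when n = 0
  cases n with
  | zero =>
    have hzero : Fintype.card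
        {z : {w : P // rank w = 0 - 1} // (z : P) ⋖ (x : P) ∧ (z : P) ⋖ (x' : P)} = 0 := by
      rw [Fintype.card_eq_zero_iff]
      constructor
      rintro ⟨z, hz1, hz2⟩
      have h1 := hP.rank_covBy _ _ hz1
      have h2 := x.2
      omega
    rw [hzero]
    have h := LinearMap.congr_fun hP.diff_zero (Pi.single x (1:ℚ))
    have h2 := congrFun h x'
    replace h2 : (∑ y : {w : P // rank w = 0 + 1},
          (if (x' : P) ⋖ (y : P) then (1:ℚ) else 0)
            * ∑ u : {w : P // rank w = 0},
                (if (u : P) ⋖ (y : P) then (1:ℚ) else 0) * Pi.single (M := fun _ => ℚ) x 1 u)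
        = (r : ℚ) * Pi.single (M := fun _ => ℚ) x 1 x' := h2
    simp only [LinearMap.comp_apply, upMap, downMap, Matrix.mulVecLin_apply,
      Matrix.mulVec, dotProduct, LinearMap.smul_apply, LinearMap.id_apply,
      Pi.smul_apply, smul_eq_mul, Pi.single_apply, mul_ite, mul_one, mul_zero,
      ite_mul, one_mul, zero_mul, Finset.sum_ite_eq', Finset.mem_univ, if_true] at h2
    rw [sum_nested] at h2
    by_cases hxx : x' = x
    · simp only [hxx, if_true, zero_add] at h2 ⊢
      exact_mod_cast h2
    · simp only [hxx, if_false] at h2 ⊢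
      exact_mod_cast h2
  | succ m =>
    have h3 : ((∑ y : {w : P // rank w = m + 2},
          (if (x' : P) ⋖ (y : P) then (1:ℚ) else 0)
            * ∑ u : {w : P // rank w = m + 1},
                (if (u : P) ⋖ (y : P) then (1:ℚ) else 0) * Pi.single (M := fun _ => ℚ) x 1 u)
        - ∑ z : {w : P // rank w = m},
            (if (z : P) ⋖ (x' : P) then (1:ℚ) else 0)
              * ∑ u : {w : P // rank w = m + 1},
                  (if (z : P) ⋖ (u : P) then (1:ℚ) else 0) * Pi.single (M := fun _ => ℚ) x 1 u)
        = (r : ℚ) * Pi.single (M := fun _ => ℚ) x 1 x' :=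
      congrFun (LinearMap.congr_fun (hP.diff m) (Pi.single x (1:ℚ))) x'
    simp only [Pi.single_apply, mul_ite, mul_one, mul_zero, Finset.sum_ite_eq',
      Finset.mem_univ, if_true] at h3
    rw [sum_nested, sum_nested, sub_eq_iff_eq_add'] at h3
    by_cases hxx : x' = x
    · simp only [hxx, if_true] at h3 ⊢
      exact_mod_cast h3
    · simp only [hxx, if_false, add_zero] at h3 ⊢
      exact_mod_cast h3

lemma lower_eq (hP : IsDifferentialPoset rank r) {x z z' : P}
    (hx : IsSingletonElem rank x) (h1 : z ⋖ x) (h2 : z' ⋖ x) : z = z' := by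
  rcases hx with h0 | ⟨w, hw, huniq⟩
  · have := hP.rank_covBy _ _ h1
    omega
  · rw [huniq z h1, huniq z' h2]

lemma exists_singleton_cover (hP : IsDifferentialPoset rank r) {x : P}
    (hx : IsThreadElem rank x) :
    ∃ y : P, x ⋖ y ∧ IsSingletonElem rank y := by
  classical
  obtain ⟨hxs, z, hzx, hzs⟩ := hx
  have hxm : rank x = rank z + 1 := hP.rank_covBy _ _ hzx
  set m := rank z with hmz
  by_contra hcon
  push_neg at hcon
  -- subtype copies
  have hxm' : rank x = m + 1 := hxm
  let xx : {w : P // rank w = m + 1} := ⟨x, hxm'⟩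
  -- the covers of x number 1 + r
  have hUcard : Fintype.card
      {y : {w : P // rank w = m + 1 + 1} // (x : P) ⋖ (y : P) ∧ (x : P) ⋖ (y : P)}
        = 1 + r := by
    have h := card_entry rank hP (m + 1) xx xx
    have hl : Fintype.card
        {z' : {w : P // rank w = m + 1 - 1} // (z' : P) ⋖ (xx : P) ∧ (z' : P) ⋖ (xx : P)}
          = 1 := by
      rw [Fintype.card_eq_one_iff]
      refine ⟨⟨⟨z, rfl⟩, hzx, hzx⟩, ?_⟩
      rintro ⟨⟨z', hz'⟩, h1, -⟩
      exact Subtype.ext (Subtype.ext (lower_eq rank hP hxs h1 hzx))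
    rw [hl, if_pos rfl] at h
    exact h
  -- every cover of x covers a second element
  have hex : ∀ y : {y : {w : P // rank w = m + 1 + 1} //
      (x : P) ⋖ (y : P) ∧ (x : P) ⋖ (y : P)}, ∃ w : P, w ⋖ ((y : {w : P // rank w = m + 1 + 1}) : P) ∧ w ≠ x := by
    rintro ⟨⟨y, hy⟩, hcov, -⟩
    have hns := hcon y hcov
    by_contra hno
    push_neg at hno
    exact hns (Or.inr ⟨x, hcov, fun w hw => hno w hw⟩)
  choose g hg1 hg2 using hex
  have hgrank : ∀ y, rank (g y) = m + 1 := by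
    intro y
    have h1 := hP.rank_covBy _ _ (hg1 y)
    have h2 := (y : {w : P // rank w = m + 1 + 1}).2
    omega
  -- common upper / lower counts with g y
  have key : ∀ y, Fintype.card
      {w : {w : P // rank w = m + 1 + 1} // (x : P) ⋖ (w : P) ∧ (g y) ⋖ (w : P)}
        = Fintype.card
      {z' : {w : P // rank w = m + 1 - 1} // (z' : P) ⋖ x ∧ (z' : P) ⋖ (g y)} := by
    intro y
    have h := card_entry rank hP (m + 1) xx ⟨g y, hgrank y⟩
    rw [if_neg (by intro hh; exact hg2 y (congrArg Subtype.val hh)), add_zero] at h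
    exact h
  have hone : ∀ y, Fintype.card
      {z' : {w : P // rank w = m + 1 - 1} // (z' : P) ⋖ x ∧ (z' : P) ⋖ (g y)} ≤ 1 := by
    intro y
    rw [Fintype.card_le_one_iff]
    rintro ⟨a, ha1, -⟩ ⟨b, hb1, -⟩
    exact Subtype.ext (Subtype.ext (lower_eq rank hP hxs ha1 hb1))
  have hmem : ∀ y, z ⋖ g y := by
    intro y
    have hpos : 0 < Fintype.card
        {w : {w : P // rank w = m + 1 + 1} // (x : P) ⋖ (w : P) ∧ (g y) ⋖ (w : P)} := by
      rw [Fintype.card_pos_iff]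
      exact ⟨⟨(y : {w : P // rank w = m + 1 + 1}), y.2.1, hg1 y⟩⟩
    rw [key y] at hpos
    rw [Fintype.card_pos_iff] at hpos
    obtain ⟨⟨z', h1, h2⟩⟩ := hpos
    have : (z' : P) = z := lower_eq rank hP hxs h1 hzx
    rwa [this] at h2
  -- the target : covers of z, at most 1 + r of them
  have hTcard : Fintype.card
      {w : {w : P // rank w = m + 1} // (z : P) ⋖ (w : P) ∧ (z : P) ⋖ (w : P)} ≤ 1 + r := by
    have h0 := card_entry rank hP m ⟨z, hmz.symm⟩ ⟨z, hmz.symm⟩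
    rw [if_pos rfl] at h0
    have h : Fintype.card
        {w : {w : P // rank w = m + 1} // (z : P) ⋖ (w : P) ∧ (z : P) ⋖ (w : P)}
          = Fintype.card
        {z' : {w : P // rank w = m - 1} // (z' : P) ⋖ z ∧ (z' : P) ⋖ z} + r := h0
    have hl : Fintype.card
        {z' : {w : P // rank w = m - 1} // (z' : P) ⋖ z ∧ (z' : P) ⋖ z} ≤ 1 := by
      rw [Fintype.card_le_one_iff]
      rintro ⟨a, ha1, -⟩ ⟨b, hb1, -⟩
      exact Subtype.ext (Subtype.ext (lower_eq rank hP hzs ha1 hb1))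
    omega
  -- build the injection
  let F : Sum {y : {w : P // rank w = m + 1 + 1} //
        (x : P) ⋖ (y : P) ∧ (x : P) ⋖ (y : P)} PUnit.{1} →
      {w : {w : P // rank w = m + 1} // (z : P) ⋖ (w : P) ∧ (z : P) ⋖ (w : P)} := fun s =>
    match s with
    | .inl y => ⟨⟨g y, hgrank y⟩, hmem y, hmem y⟩
    | .inr _ => ⟨⟨x, hxm'⟩, hzx, hzx⟩
  have hFinj : Function.Injective F := by
    rintro (y | ⟨⟩) (y' | ⟨⟩) hF
    · have hgy : g y = g y' := congrArg Subtype.val (congrArg Subtype.val hF)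
      have hle : Fintype.card
          {w : {w : P // rank w = m + 1 + 1} // (x : P) ⋖ (w : P) ∧ (g y) ⋖ (w : P)} ≤ 1 :=
        (key y).le.trans (hone y)
      rw [Fintype.card_le_one_iff] at hle
      have := hle ⟨(y : {w : P // rank w = m + 1 + 1}), y.2.1, hg1 y⟩
        ⟨(y' : {w : P // rank w = m + 1 + 1}), y'.2.1, hgy ▸ hg1 y'⟩
      have h5 := congrArg Subtype.val this
      exact congrArg Sum.inl (Subtype.ext h5)
    · exact absurd (congrArg Subtype.val (congrArg Subtype.val hF)) (hg2 y)
    · exact absurd (congrArg Subtype.val (congrArg Subtype.val hF)).symm (hg2 y')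
    · rfl
  have hcard := Fintype.card_le_of_injective F hFinj
  rw [Fintype.card_sum, hUcard] at hcard
  simp only [Fintype.card_unique] at hcard
  omega

end Aux

/-- In an `r`-differential poset, the number `τ_n` of thread elements of
rank `n` is nondecreasing in `n`. -/
theorem thread_count_mono {P : Type*} [PartialOrder P] (rank : P → ℕ)
    [∀ m : ℕ, Fintype {x : P // rank x = m}] (r : ℕ)
    (hP : IsDifferentialPoset rank r) (n : ℕ) :
    Set.ncard {x : P | rank x = n ∧ IsThreadElem rank x}
      ≤ Set.ncard {x : P | rank x = n + 1 ∧ IsThreadElem rank x} := by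
  classical
  have hS : ∀ x : P, ∃ y : P,
      (rank x = n ∧ IsThreadElem rank x) → (x ⋖ y ∧ IsSingletonElem rank y) := by
    intro x
    by_cases h : rank x = n ∧ IsThreadElem rank x
    · obtain ⟨y, hy⟩ := exists_singleton_cover rank hP h.2
      exact ⟨y, fun _ => hy⟩
    · exact ⟨x, fun hh => absurd hh h⟩
  choose f hf using hS
  have hfin : {x : P | rank x = n + 1 ∧ IsThreadElem rank x}.Finite := by
    apply Set.Finite.subset (Set.finite_range ((↑) : {w : P // rank w = n + 1} → P))
    rintro w ⟨hw, -⟩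
    exact ⟨⟨w, hw⟩, rfl⟩
  apply Set.ncard_le_ncard_of_injOn f ?_ ?_ hfin
  · rintro a ⟨ha1, ha2⟩
    obtain ⟨hcov, hsing⟩ := hf a ⟨ha1, ha2⟩
    refine ⟨?_, hsing, a, hcov, ha2.1⟩
    rw [hP.rank_covBy _ _ hcov, ha1]
  · rintro a ⟨ha1, ha2⟩ b ⟨hb1, hb2⟩ hab
    obtain ⟨hca, hsa⟩ := hf a ⟨ha1, ha2⟩
    obtain ⟨hcb, hsb⟩ := hf b ⟨hb1, hb2⟩
    exact lower_eq rank hP hsa hca (hab ▸ hcb)
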